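/- Let t ≥ 1 and let G be a finite simple graph whose adjacency matrix has spectrum {(4t+1)^1, (2t−1)^{2t}, (−1)^{(t+1)^2}, (−3)^{t^2}}. If C is a clique in G of order c, then c ≤ 2t+2. Moreover, if c = 2t+2, then every vertex of G outside C has exactly 2 neighbors in C. -/

import Mathlib

open Polynomial Matrix SimpleGraph

/-- The `n × n`-grid: the Cartesian (box) product of two complete graphs on `Fin n`.
Vertices are pairs `(i, j)`, two distinct vertices being adjacent iff they agree in
exactly one coordinate. -/
def gridGraph (n : ℕ) : SimpleGraph (Fin n × Fin n) :=
  (⊤ : SimpleGraph (Fin n)) □ (⊤ : SimpleGraph (Fin n))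

/-- The `q`-clique extension of a graph `G`: the graph on `V × Fin q` in which `(x, i)`
and `(y, j)` are adjacent iff `x` and `y` are adjacent in `G`, or `x = y` and `i ≠ j`. -/
def cliqueExt {V : Type*} (q : ℕ) (G : SimpleGraph V) : SimpleGraph (V × Fin q) where
  Adj a b := G.Adj a.1 b.1 ∨ (a.1 = b.1 ∧ a.2 ≠ b.2)
  symm := by
    refine ⟨?_⟩
    rintro ⟨x, i⟩ ⟨y, j⟩ (h | ⟨h, hij⟩)
    · exact Or.inl h.symm
    · exact Or.inr ⟨h.symm, hij.symm⟩
  loopless := by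
    refine ⟨?_⟩
    rintro ⟨x, i⟩ (h | ⟨-, hij⟩)
    · exact G.irrefl h
    · exact hij rfl

instance cliqueExtAdjDec {V : Type*} (q : ℕ) (G : SimpleGraph V) [DecidableRel G.Adj]
    [DecidableEq V] : DecidableRel (cliqueExt q G).Adj :=
  fun a b => inferInstanceAs (Decidable (G.Adj a.1 b.1 ∨ (a.1 = b.1 ∧ a.2 ≠ b.2)))

instance boxProdAdjDec {α β : Type*} (G : SimpleGraph α) (H : SimpleGraph β)
    [DecidableRel G.Adj] [DecidableRel H.Adj] [DecidableEq α] [DecidableEq β] :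
    DecidableRel (G □ H).Adj :=
  fun x y => inferInstanceAs (Decidable (G.Adj x.1 y.1 ∧ x.2 = y.2 ∨ H.Adj x.2 y.2 ∧ x.1 = y.1))

instance gridAdjDec (n : ℕ) : DecidableRel (gridGraph n).Adj := by
  unfold gridGraph; infer_instance

lemma charpoly_conj_aux {n R : Type*} [Fintype n] [DecidableEq n] [CommRing R]
    (P B Q : Matrix n n R) (h1 : P * Q = 1) (h2 : Q * P = 1) :
    (P * B * Q).charpoly = B.charpoly := by
  have hPQ : P.map (C : R →+* R[X]) * Q.map C = 1 := by
    rw [← Matrix.map_mul, h1, Matrix.map_one _ (map_zero _) (map_one _)]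
  have hQP : Q.map (C : R →+* R[X]) * P.map C = 1 := by
    rw [← Matrix.map_mul, h2, Matrix.map_one _ (map_zero _) (map_one _)]
  have hm : charmatrix (P * B * Q) = P.map C * charmatrix B * Q.map C := by
    unfold charmatrix
    rw [Matrix.mul_sub, Matrix.sub_mul]
    congr 1
    · rw [← (scalar_commute (X : R[X]) (Commute.all X) (P.map C)).eq, mul_assoc, hPQ, mul_one]
    · simp only [RingHom.mapMatrix_apply, ← Matrix.map_mul]
  unfold Matrix.charpoly
  rw [hm, det_mul, det_mul, mul_comm, ← mul_assoc, ← det_mul, hQP, det_one, one_mul]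

lemma charpoly_diagonal' {n R : Type*} [Fintype n] [DecidableEq n] [CommRing R] (d : n → R) :
    (Matrix.diagonal d).charpoly = ∏ i, (X - C (d i)) := by
  have hm : charmatrix (Matrix.diagonal d) = Matrix.diagonal fun i => X - C (d i) := by
    ext i j
    by_cases h : i = j
    · subst h; simp
    · rw [charmatrix_apply_ne _ _ _ h, Matrix.diagonal_apply_ne _ h,
        Matrix.diagonal_apply_ne _ h, map_zero, neg_zero]
  rw [Matrix.charpoly, hm, Matrix.det_diagonal]

lemma clique_arith (t c β : ℝ) (ht1 : 1 ≤ t) (hβ : β * (t+1) = 1)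
    (h0 : 0 ≤ β*c^2 + (2*t-1)*c - c*(c-1)) : c ≤ 2*t+2 := by
  by_contra hgt
  push_neg at hgt
  have h0t : 0 ≤ (β*c^2 + (2*t-1)*c - c*(c-1))*(t+1) := mul_nonneg h0 (by linarith)
  have hβ2 : β*c^2*(t+1) = c^2 := by linear_combination c^2 * hβ
  have h3 : 0 < t*(c-(2*t+2))*c := by
    have hc0 : 0 < c := by nlinarith
    exact mul_pos (mul_pos (by linarith) (by linarith)) hc0
  nlinarith [h0t, hβ2, h3]

/-- Let `t ≥ 1` and let `G` be a finite simple graph whose adjacency matrix has spectrum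
`{(4t+1)^1, (2t−1)^{2t}, (−1)^{(t+1)^2}, (−3)^{t^2}}`. If `K` is a clique in `G` of order
`c`, then `c ≤ 2t+2`; moreover, if `c = 2t+2`, then every vertex of `G` outside `K` has
exactly `2` neighbors in `K`. -/
theorem stmt_10 (t : ℕ) (ht : 1 ≤ t) {V : Type*} [Fintype V] [DecidableEq V]
    (G : SimpleGraph V) [DecidableRel G.Adj]
    (hchar : (G.adjMatrix ℝ).charpoly =
      (X - C (4 * (t : ℝ) + 1)) * (X - C (2 * (t : ℝ) - 1)) ^ (2 * t) *
        (X + 1) ^ ((t + 1) ^ 2) * (X + 3) ^ (t ^ 2))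
    (c : ℕ) (K : Finset V) (hK : G.IsNClique c K) :
    c ≤ 2 * t + 2 ∧
      (c = 2 * t + 2 → ∀ x : V, x ∉ K → (K.filter (G.Adj x)).card = 2) := by
  classical
  have ht1 : (1:ℝ) ≤ (t:ℝ) := by exact_mod_cast ht
  set A : Matrix V V ℝ := G.adjMatrix ℝ with hAdef
  have hAs : ∀ a b, A a b = A b a := by
    intro a b
    simp only [hAdef, SimpleGraph.adjMatrix_apply]
    exact if_congr (G.adj_comm a b) rfl rfl
  have hA : A.IsHermitian := by
    unfold Matrix.IsHermitian
    ext i j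
    simp only [Matrix.conjTranspose_apply, star_trivial]
    exact hAs j i
  set U : Matrix V V ℝ := (hA.eigenvectorUnitary : Matrix V V ℝ) with hUdef
  set μ : V → ℝ := hA.eigenvalues with hμdef
  have hU1 : star U * U = 1 := Unitary.coe_star_mul_self hA.eigenvectorUnitary
  have hU2 : U * star U = 1 := Unitary.coe_mul_star_self hA.eigenvectorUnitary
  have hsp : A = U * Matrix.diagonal μ * star U := by
    have h := hA.spectral_theorem
    simpa [hUdef, hμdef] using h
  have key : ∀ v z : V → ℝ, v ⬝ᵥ (U *ᵥ z) = (star U *ᵥ v) ⬝ᵥ z := by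
    intro v z
    have hs : star U *ᵥ v = v ᵥ* U := by
      rw [← Matrix.mulVec_transpose]
      congr 1
    rw [hs, ← Matrix.dotProduct_mulVec]
  have dotU : ∀ v w : V → ℝ, (star U *ᵥ v) ⬝ᵥ (star U *ᵥ w) = v ⬝ᵥ w := by
    intro v w
    rw [← key v (star U *ᵥ w), Matrix.mulVec_mulVec, hU2, Matrix.one_mulVec]
  have form : ∀ v w : V → ℝ,
      v ⬝ᵥ (A *ᵥ w) = ∑ i, μ i * ((star U *ᵥ v) i * (star U *ᵥ w) i) := by
    intro v w
    rw [hsp, ← Matrix.mulVec_mulVec, ← Matrix.mulVec_mulVec, key]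
    simp only [dotProduct, Matrix.mulVec_diagonal]
    exact Finset.sum_congr rfl fun i _ => by ring
  -- eigenvalue multiset facts
  have hprod : ∏ i, (X - C (μ i)) =
      (X - C (4 * (t : ℝ) + 1)) * (X - C (2 * (t : ℝ) - 1)) ^ (2 * t) *
        (X + 1) ^ ((t + 1) ^ 2) * (X + 3) ^ (t ^ 2) := by
    rw [← charpoly_diagonal' μ,
      ← charpoly_conj_aux U (Matrix.diagonal μ) (star U) hU2 hU1, ← hsp]
    exact hchar
  have e1 : (X + 1 : ℝ[X]) = X - C (-1) := by rw [map_neg, _root_.map_one, sub_neg_eq_add]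
  have e3 : (X + 3 : ℝ[X]) = X - C (-3) := by rw [map_neg, sub_neg_eq_add, map_ofNat]
  have hroots : (Finset.univ.val.map μ) =
      {(4*(t:ℝ)+1)} + Multiset.replicate (2*t) (2*(t:ℝ)-1)
        + Multiset.replicate ((t+1)^2) (-1 : ℝ) + Multiset.replicate (t^2) (-3 : ℝ) := by
    have hL : ((Finset.univ.val.map μ).map fun a => X - C a).prod.roots = Finset.univ.val.map μ :=
      roots_multiset_prod_X_sub_C _
    rw [Multiset.map_map] at hL
    have hLP : ((Finset.univ.val.map fun i => X - C (μ i))).prod = ∏ i, (X - C (μ i)) := rfl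
    rw [show ((fun a => X - C a) ∘ μ) = fun i => X - (C (μ i)) from rfl, hLP, hprod, e1, e3] at hL
    have m1 : (X - C (4 * (t : ℝ) + 1)).Monic := monic_X_sub_C _
    have m2 : ((X - C (2 * (t : ℝ) - 1)) ^ (2*t)).Monic := (monic_X_sub_C _).pow _
    have m3 : ((X - C (-1 : ℝ)) ^ ((t+1)^2)).Monic := (monic_X_sub_C _).pow _
    have m4 : ((X - C (-3 : ℝ)) ^ (t^2)).Monic := (monic_X_sub_C _).pow _
    rw [Polynomial.roots_mul (((m1.mul m2).mul m3).mul m4).ne_zero,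
      Polynomial.roots_mul ((m1.mul m2).mul m3).ne_zero,
      Polynomial.roots_mul (m1.mul m2).ne_zero,
      Polynomial.roots_pow, Polynomial.roots_pow, Polynomial.roots_pow,
      roots_X_sub_C, roots_X_sub_C, roots_X_sub_C, roots_X_sub_C,
      Multiset.nsmul_singleton, Multiset.nsmul_singleton, Multiset.nsmul_singleton] at hL
    exact hL.symm
  have hmem : ∀ i, μ i = 4*(t:ℝ)+1 ∨ μ i = 2*(t:ℝ)-1 ∨ μ i = -1 ∨ μ i = -3 := by
    intro i
    have h : μ i ∈ Finset.univ.val.map μ := Multiset.mem_map_of_mem _ (Finset.mem_univ_val i)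
    rw [hroots] at h
    simp only [Multiset.mem_add, Multiset.mem_singleton, Multiset.mem_replicate] at h
    tauto
  have hcard : (Fintype.card V : ℝ) = 2*((t:ℝ)+1)^2 := by
    have h := congrArg Multiset.card hroots
    simp only [Multiset.card_map, Multiset.card_add, Multiset.card_singleton,
      Multiset.card_replicate] at h
    have h2 : Fintype.card V = 1 + 2*t + (t+1)^2 + t^2 := by simpa using h
    rw [h2]; push_cast; ring
  have hsum2 : ∑ i, (μ i)^2 =
      (4*(t:ℝ)+1)^2 + 2*t*(2*(t:ℝ)-1)^2 + ((t:ℝ)+1)^2 + 9*t^2 := by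
    rw [show ∑ i, (μ i)^2 = ((Finset.univ.val.map μ).map (fun x => x^2)).sum by
      rw [Multiset.map_map]; rfl]
    rw [hroots]
    simp only [Multiset.map_add, Multiset.map_singleton, Multiset.map_replicate,
      Multiset.sum_add, Multiset.sum_singleton, Multiset.sum_replicate, smul_eq_mul]
    push_cast; ring
  have hcnt : (Finset.univ.filter fun i => (4*(t:ℝ)+1) = μ i).card = 1 := by
    have h := congrArg (Multiset.count (4*(t:ℝ)+1)) hroots
    rw [Multiset.count_map] at h
    simp only [Multiset.count_add, Multiset.count_singleton, Multiset.count_replicate] at h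
    have c2 : ¬(2*(t:ℝ)-1 = 4*(t:ℝ)+1) := by intro hc; nlinarith
    have c3 : ¬(-1 = 4*(t:ℝ)+1) := by intro hc; nlinarith
    have c4 : ¬(-3 = 4*(t:ℝ)+1) := by intro hc; nlinarith
    simp only [if_true, if_neg c2, if_neg c3, if_neg c4, add_zero] at h
    rw [Finset.card_def, Finset.filter_val]
    exact h
  obtain ⟨i₀, hi0⟩ := Finset.card_eq_one.mp hcnt
  have hμi0 : μ i₀ = 4*(t:ℝ)+1 := by
    have h : i₀ ∈ Finset.univ.filter fun i => (4*(t:ℝ)+1) = μ i := by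
      rw [hi0]; exact Finset.mem_singleton_self i₀
    exact ((Finset.mem_filter.mp h).2).symm
  have hne : ∀ i, i ≠ i₀ → μ i ≠ 4*(t:ℝ)+1 := by
    intro i hi hc
    apply hi
    have h : i ∈ Finset.univ.filter fun j => (4*(t:ℝ)+1) = μ j :=
      Finset.mem_filter.mpr ⟨Finset.mem_univ i, hc.symm⟩
    rw [hi0] at h
    exact Finset.mem_singleton.mp h
  have hle : ∀ i, μ i ≤ 4*(t:ℝ)+1 := by
    intro i; rcases hmem i with h | h | h | h <;> rw [h] <;> linarith
  have hlt : ∀ i, i ≠ i₀ → μ i ≤ 2*(t:ℝ)-1 := by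
    intro i hi
    rcases hmem i with h | h | h | h
    · exact absurd h (hne i hi)
    · rw [h]
    · rw [h]; linarith
    · rw [h]; linarith
  -- regularity data
  set one : V → ℝ := fun _ => 1 with honedef
  set u : V → ℝ := star U *ᵥ one with hudef
  have huu : ∑ i, u i * u i = (Fintype.card V : ℝ) := by
    have h := dotU one one
    simp only [dotProduct, honedef, mul_one] at h
    rw [hudef]
    simpa using h
  have hAone : ∑ i, μ i * (u i * u i) = ∑ i, (μ i)^2 := by
    have h1 := form one one
    have h1A1 : one ⬝ᵥ (A *ᵥ one) = Matrix.trace (A * A) := by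
      rw [Matrix.trace]
      simp only [dotProduct, Matrix.mulVec, Matrix.diag_apply, Matrix.mul_apply, honedef,
        one_mul, mul_one, dotProduct]
      refine Finset.sum_congr rfl fun a _ => Finset.sum_congr rfl fun b _ => ?_
      by_cases h : G.Adj a b
      · simp [hAdef, h, G.adj_comm a b |>.mp h]
      · simp [hAdef, h]
    have htrA2 : Matrix.trace (A * A) = ∑ i, (μ i)^2 := by
      have hAA : A * A = U * Matrix.diagonal (fun i => μ i * μ i) * star U := by
        rw [hsp, Matrix.mul_assoc (U * Matrix.diagonal μ) (star U) (U * Matrix.diagonal μ * star U),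
          ← Matrix.mul_assoc (star U) (U * Matrix.diagonal μ) (star U),
          ← Matrix.mul_assoc (star U) U (Matrix.diagonal μ), hU1, one_mul,
          ← Matrix.mul_assoc (U * Matrix.diagonal μ) (Matrix.diagonal μ) (star U),
          Matrix.mul_assoc U (Matrix.diagonal μ) (Matrix.diagonal μ), Matrix.diagonal_mul_diagonal]
      rw [hAA, Matrix.trace_mul_cycle, hU1, one_mul, Matrix.trace_diagonal]
      exact Finset.sum_congr rfl fun i _ => (sq (μ i)).symm
    rw [← hudef] at h1
    rw [← h1, h1A1, htrA2]
  have hzero : ∑ i, (4*(t:ℝ)+1 - μ i) * (u i * u i) = 0 := by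
    have hexp : ∑ i, (4*(t:ℝ)+1 - μ i) * (u i * u i)
        = (4*(t:ℝ)+1) * (∑ i, u i * u i) - ∑ i, μ i * (u i * u i) := by
      rw [Finset.mul_sum, ← Finset.sum_sub_distrib]
      exact Finset.sum_congr rfl fun i _ => by ring
    rw [hexp, huu, hAone, hsum2, hcard]; ring
  have hu0 : ∀ i, i ≠ i₀ → u i = 0 := by
    intro i hi
    have hterms : ∀ j ∈ Finset.univ, (0:ℝ) ≤ (4*(t:ℝ)+1 - μ j) * (u j * u j) :=
      fun j _ => mul_nonneg (by have := hle j; linarith) (mul_self_nonneg _)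
    have h := (Finset.sum_eq_zero_iff_of_nonneg hterms).mp hzero i (Finset.mem_univ i)
    have hpos : 0 < 4*(t:ℝ)+1 - μ i := by
      have := hlt i hi; linarith
    have h2 : u i * u i = 0 := by
      rcases mul_eq_zero.mp h with h' | h'
      · exact absurd h' (ne_of_gt hpos)
      · exact h'
    exact mul_self_eq_zero.mp h2
  have hui0 : u i₀ * u i₀ = (Fintype.card V : ℝ) := by
    rw [← huu]
    symm
    apply Finset.sum_eq_single i₀
    · intro b _ hb; rw [hu0 b hb, zero_mul]
    · intro h; exact absurd (Finset.mem_univ i₀) h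
  -- the PSD matrix
  set β : ℝ := 1/((t:ℝ)+1) with hβdef
  have htpos : (0:ℝ) < (t:ℝ)+1 := by linarith
  have hβc : β * ((t:ℝ)+1) = 1 := by
    rw [hβdef]; field_simp
  set M : Matrix V V ℝ :=
    Matrix.of (fun a b : V => β + (if a = b then 2*(t:ℝ)-1 else 0) - A a b) with hMdef
  have hMrow : ∀ (w : V → ℝ) (a : V),
      (M *ᵥ w) a = β * (∑ b, w b) + (2*(t:ℝ)-1) * w a - (A *ᵥ w) a := by
    intro w a
    simp only [Matrix.mulVec, dotProduct, hMdef, Matrix.of_apply]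
    rw [Finset.sum_congr rfl (fun b _ => show
        (β + (if a = b then 2*(t:ℝ)-1 else 0) - A a b) * w b
          = β * w b + (if a = b then (2*(t:ℝ)-1) * w b else 0) - A a b * w b by
      by_cases h : a = b <;> simp [h] <;> ring)]
    rw [Finset.sum_sub_distrib, Finset.sum_add_distrib, ← Finset.mul_sum,
      Finset.sum_ite_eq Finset.univ a (fun b => (2*(t:ℝ)-1) * w b), if_pos (Finset.mem_univ a)]
  have quad : ∀ w : V → ℝ, w ⬝ᵥ (M *ᵥ w)
      = β * (∑ b, w b)^2 + (2*(t:ℝ)-1) * (∑ a, w a * w a) - w ⬝ᵥ (A *ᵥ w) := by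
    intro w
    simp only [dotProduct]
    rw [Finset.sum_congr rfl (fun a _ => show w a * (M *ᵥ w) a
        = β * (∑ b, w b) * w a + (2*(t:ℝ)-1) * (w a * w a) - w a * (A *ᵥ w) a by
      rw [hMrow w a]; ring)]
    rw [Finset.sum_sub_distrib, Finset.sum_add_distrib, ← Finset.mul_sum, ← Finset.mul_sum]
    ring
  have hMps : M.PosSemidef := by
    refine Matrix.posSemidef_iff_dotProduct_mulVec.mpr ⟨?_, ?_⟩
    · unfold Matrix.IsHermitian
      ext i j
      simp only [Matrix.conjTranspose_apply, star_trivial, hMdef, Matrix.of_apply]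
      rw [hAs j i]
      congr 1
      congr 1
      exact if_congr eq_comm rfl rfl
    · intro x
      have hsx : star x = x := funext fun i => star_trivial _
      rw [hsx, quad x]
      set x' : V → ℝ := star U *ᵥ x with hx'def
      have e2 : ∑ a, x a * x a = ∑ i, x' i * x' i := by
        have h := dotU x x
        simp only [dotProduct] at h
        rw [← h, hx'def]
      have e3 : x ⬝ᵥ (A *ᵥ x) = ∑ i, μ i * (x' i * x' i) := form x x
      have e1 : ∑ b, x b = u i₀ * x' i₀ := by
        have h := dotU one x
        simp only [dotProduct, honedef, one_mul] at h
        rw [← h, ← hudef, ← hx'def]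
        apply Finset.sum_eq_single i₀
        · intro b _ hb; rw [hu0 b hb, zero_mul]
        · intro h'; exact absurd (Finset.mem_univ i₀) h'
      rw [e1, e2, e3]
      have e5 : β * (u i₀ * x' i₀)^2 = (2*(t:ℝ)+2) * (x' i₀ * x' i₀) := by
        have h : (u i₀ * x' i₀)^2 = (u i₀ * u i₀) * (x' i₀ * x' i₀) := by ring
        rw [h, hui0, hcard, hβdef]
        field_simp
      have e6 : (2*(t:ℝ)-1) * (∑ i, x' i * x' i) - ∑ i, μ i * (x' i * x' i)
          = ∑ i, (2*(t:ℝ)-1 - μ i) * (x' i * x' i) := by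
        rw [Finset.mul_sum, ← Finset.sum_sub_distrib]
        exact Finset.sum_congr rfl fun i _ => by ring
      have e7 : ∑ i, (2*(t:ℝ)-1 - μ i) * (x' i * x' i)
          = (2*(t:ℝ)-1 - μ i₀) * (x' i₀ * x' i₀)
            + ∑ i ∈ Finset.univ.erase i₀, (2*(t:ℝ)-1 - μ i) * (x' i * x' i) :=
        (Finset.add_sum_erase _ _ (Finset.mem_univ i₀)).symm
      have hrest : 0 ≤ ∑ i ∈ Finset.univ.erase i₀, (2*(t:ℝ)-1 - μ i) * (x' i * x' i) :=
        Finset.sum_nonneg fun i hi =>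
          mul_nonneg (by have := hlt i (Finset.mem_erase.mp hi).1; linarith) (mul_self_nonneg _)
      have hgoal : β * (u i₀ * x' i₀)^2 + ((2*(t:ℝ)-1) * (∑ i, x' i * x' i)
          - ∑ i, μ i * (x' i * x' i))
          = ∑ i ∈ Finset.univ.erase i₀, (2*(t:ℝ)-1 - μ i) * (x' i * x' i) := by
        rw [e6, e7, e5, hμi0]; ring
      linarith [hgoal, hrest]
  -- clique computations
  set χ : V → ℝ := fun v => if v ∈ K then 1 else 0 with hχdef
  have hχsum : ∑ b, χ b = (c:ℝ) := by
    simp only [hχdef]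
    rw [Finset.sum_boole]
    simp only [Finset.filter_mem_eq_inter, Finset.univ_inter]
    exact_mod_cast congrArg (Nat.cast (R := ℝ)) hK.2
  have hχχ : ∑ a, χ a * χ a = (c:ℝ) := by
    rw [Finset.sum_congr rfl (fun a _ => show χ a * χ a = χ a by
      simp only [hχdef]; by_cases h : a ∈ K <;> simp [h])]
    exact hχsum
  have hAχ : ∀ x : V, (A *ᵥ χ) x = ((K.filter (G.Adj x)).card : ℝ) := by
    intro x
    simp only [Matrix.mulVec, dotProduct, hχdef, hAdef, SimpleGraph.adjMatrix_apply]
    rw [Finset.sum_congr rfl (fun v _ => show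
        (if G.Adj x v then (1:ℝ) else 0) * (if v ∈ K then 1 else 0)
          = if v ∈ K.filter (G.Adj x) then 1 else 0 by
      by_cases h1 : G.Adj x v <;> by_cases h2 : v ∈ K <;> simp [h1, h2, Finset.mem_filter])]
    rw [Finset.sum_boole, Finset.filter_univ_mem]
  have hχAχ : χ ⬝ᵥ (A *ᵥ χ) = (c:ℝ) * ((c:ℝ) - 1) := by
    rw [dotProduct]
    rw [Finset.sum_congr rfl (fun a _ => show χ a * (A *ᵥ χ) a
        = (if a ∈ K then ((K.filter (G.Adj a)).card : ℝ) else 0) by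
      simp only [hχdef]
      by_cases h : a ∈ K <;> simp [h, show (A *ᵥ fun v => if v ∈ K then (1:ℝ) else 0) a = _ from hAχ a])]
    rw [Finset.sum_ite_mem, Finset.univ_inter]
    have hfilter : ∀ a ∈ K, ((K.filter (G.Adj a)).card : ℝ) = (c:ℝ) - 1 := by
      intro a ha
      have hfe : K.filter (G.Adj a) = K.erase a := by
        ext v
        simp only [Finset.mem_filter, Finset.mem_erase]
        constructor
        · rintro ⟨hv, hadj⟩
          exact ⟨fun he => G.irrefl (he ▸ hadj), hv⟩
        · rintro ⟨hv, hvK⟩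
          exact ⟨hvK, hK.1 (Finset.mem_coe.mpr ha) (Finset.mem_coe.mpr hvK)
            (fun he => hv he.symm)⟩
      rw [hfe, Finset.card_erase_of_mem ha, Nat.cast_sub (Finset.one_le_card.mpr ⟨a, ha⟩), hK.2]
      simp
    rw [Finset.sum_congr rfl hfilter, Finset.sum_const, hK.2, nsmul_eq_mul]
  have h0 : (0:ℝ) ≤ β * (c:ℝ)^2 + (2*(t:ℝ)-1) * (c:ℝ) - (c:ℝ) * ((c:ℝ) - 1) := by
    have h := hMps.dotProduct_mulVec_nonneg χ
    have hsx : star χ = χ := funext fun i => star_trivial _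
    rw [hsx, quad χ, hχsum, hχχ, hχAχ] at h
    exact h
  have hβc2 : β * (c:ℝ)^2 * ((t:ℝ)+1) = (c:ℝ)^2 := by
    linear_combination (c:ℝ)^2 * hβc
  constructor
  · have hR : (c:ℝ) ≤ 2*(t:ℝ)+2 := clique_arith (t:ℝ) (c:ℝ) β ht1 hβc h0
    have : (c:ℝ) ≤ ((2*t+2 : ℕ):ℝ) := by push_cast; linarith
    exact_mod_cast this
  · intro hc x hx
    have hcR : (c:ℝ) = 2*(t:ℝ)+2 := by rw [hc]; push_cast; ring
    have hQ0 : β * (c:ℝ)^2 + (2*(t:ℝ)-1) * (c:ℝ) - (c:ℝ) * ((c:ℝ) - 1) = 0 := by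
      rw [hcR]
      linear_combination (4*(t:ℝ)+4) * hβc
    have hdot : star χ ⬝ᵥ (M *ᵥ χ) = 0 := by
      have hsx : star χ = χ := funext fun i => star_trivial _
      rw [hsx, quad χ, hχsum, hχχ, hχAχ, hQ0]
    have hMχ : M *ᵥ χ = 0 := (hMps.dotProduct_mulVec_zero_iff χ).mp hdot
    have hx0 : χ x = 0 := by simp [hχdef, hx]
    have h := congrFun hMχ x
    rw [hMrow χ x, hχsum, hAχ x, hx0] at h
    simp only [Pi.zero_apply] at h
    have hcard2 : ((K.filter (G.Adj x)).card : ℝ) = 2 := by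
      have hβc' : β * (c:ℝ) = 2 := by
        rw [hcR]; linear_combination 2 * hβc
      linarith [h, hβc']
    exact_mod_cast hcard2
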